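/- Let α = -2sin(8π/7)/√7, β = -2sin(4π/7)/√7, γ = -2sin(2π/7)/√7, and let ω be the symmetric 3×3 matrix with rows (α,β,γ), (β,γ,α), (γ,α,β). Then ω² is the identity matrix. -/

import Mathlib

open Real

lemma cos_sum : Real.cos (2*π/7) + Real.cos (4*π/7) + Real.cos (6*π/7) = -1/2 := by
  have hs : Real.sin (π/7) ≠ 0 := by
    apply ne_of_gt
    apply Real.sin_pos_of_pos_of_lt_pi
    · positivity
    · nlinarith [Real.pi_pos]
  have key : ∀ b : ℝ, Real.sin (b + π/7) - Real.sin (b - π/7) = 2 * Real.cos b * Real.sin (π/7) := by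
    intro b; rw [Real.sin_add, Real.sin_sub]; ring
  have h1 := key (2*π/7)
  have h2 := key (4*π/7)
  have h3 := key (6*π/7)
  have e1 : 2*π/7 + π/7 = 3*π/7 := by ring
  have e2 : 2*π/7 - π/7 = π/7 := by ring
  have e3 : 4*π/7 + π/7 = 5*π/7 := by ring
  have e4 : 4*π/7 - π/7 = 3*π/7 := by ring
  have e5 : 6*π/7 + π/7 = π := by ring
  have e6 : 6*π/7 - π/7 = 5*π/7 := by ring
  rw [e1, e2] at h1; rw [e3, e4] at h2; rw [e5, e6, Real.sin_pi] at h3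
  have : 2 * (Real.cos (2*π/7) + Real.cos (4*π/7) + Real.cos (6*π/7)) * Real.sin (π/7)
      = -Real.sin (π/7) := by linarith
  have := mul_right_cancel₀ hs (by linarith : (2 * (Real.cos (2*π/7) + Real.cos (4*π/7) + Real.cos (6*π/7))) * Real.sin (π/7) = (-1) * Real.sin (π/7))
  linarith

lemma L1 : Real.sin (8*π/7)^2 + Real.sin (4*π/7)^2 + Real.sin (2*π/7)^2 = 7/4 := by
  have c1 : Real.cos (2*(8*π/7)) = Real.cos (2*π/7) := by
    rw [show 2*(8*π/7) = 2*π/7 + 2*π by ring, Real.cos_add_two_pi]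
  have c2 : Real.cos (2*(4*π/7)) = Real.cos (6*π/7) := by
    rw [show 2*(4*π/7) = 2*π - 6*π/7 by ring, Real.cos_two_pi_sub]
  have c3 : Real.cos (2*(2*π/7)) = Real.cos (4*π/7) := by ring_nf
  have s1 := Real.sin_sq_eq_half_sub (8*π/7)
  have s2 := Real.sin_sq_eq_half_sub (4*π/7)
  have s3 := Real.sin_sq_eq_half_sub (2*π/7)
  rw [c1] at s1; rw [c2] at s2; rw [c3] at s3
  have := cos_sum
  linarith

lemma L2 : Real.sin (8*π/7) * Real.sin (4*π/7) + Real.sin (4*π/7) * Real.sin (2*π/7)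
    + Real.sin (2*π/7) * Real.sin (8*π/7) = 0 := by
  have key : ∀ x y : ℝ, Real.cos (x - y) - Real.cos (x + y) = 2 * (Real.sin x * Real.sin y) := by
    intro x y; rw [Real.cos_sub, Real.cos_add]; ring
  have h1 := key (8*π/7) (4*π/7)
  have h2 := key (4*π/7) (2*π/7)
  have h3 := key (2*π/7) (8*π/7)
  have e1 : 8*π/7 - 4*π/7 = 4*π/7 := by ring
  have e2 : 8*π/7 + 4*π/7 = 12*π/7 := by ring
  have e3 : 4*π/7 - 2*π/7 = 2*π/7 := by ring
  have e4 : 4*π/7 + 2*π/7 = 6*π/7 := by ring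
  have e5 : 2*π/7 - 8*π/7 = -(6*π/7) := by ring
  have e6 : 2*π/7 + 8*π/7 = 10*π/7 := by ring
  have c1 : Real.cos (12*π/7) = Real.cos (2*π/7) := by
    rw [show 12*π/7 = 2*π - 2*π/7 by ring, Real.cos_two_pi_sub]
  have c2 : Real.cos (10*π/7) = Real.cos (4*π/7) := by
    rw [show 10*π/7 = 2*π - 4*π/7 by ring, Real.cos_two_pi_sub]
  rw [e1, e2, c1] at h1; rw [e3, e4] at h2; rw [e5, e6, Real.cos_neg, c2] at h3
  linarith

theorem omega_sq_eq_one
    (α β γ : ℝ)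
    (hα : α = -2 * Real.sin (8 * π / 7) / Real.sqrt 7)
    (hβ : β = -2 * Real.sin (4 * π / 7) / Real.sqrt 7)
    (hγ : γ = -2 * Real.sin (2 * π / 7) / Real.sqrt 7)
    (ω : Matrix (Fin 3) (Fin 3) ℝ)
    (hω : ω = !![α, β, γ; β, γ, α; γ, α, β]) :
    ω * ω = 1 := by
  have h7 : Real.sqrt 7 * Real.sqrt 7 = 7 := Real.mul_self_sqrt (by norm_num)
  have h7' : Real.sqrt 7 ≠ 0 := by positivity
  have hd : α^2 + β^2 + γ^2 = 1 := by
    subst hα hβ hγ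
    have := L1
    field_simp
    rw [show π * 4 / 7 = 4 * π / 7 by ring]
    nlinarith [this, h7]
  have ho : α*β + β*γ + γ*α = 0 := by
    subst hα hβ hγ
    have := L2
    field_simp
    rw [show π * 4 / 7 = 4 * π / 7 by ring]
    nlinarith [this, h7]
  subst hω
  ext i j
  fin_cases i <;> fin_cases j <;>
    simp [Matrix.mul_apply, Fin.sum_univ_succ, Matrix.one_apply] <;>
    first | linear_combination hd | linear_combination ho
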